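/- Define F_d(x,t) = h(tx) + 2h((1-t)x) + h(1-(2-t)x) - (2 - 2/d)(h(x) + h(1-x)) for 0 \le x \le t \le 1, with h(y) = -y log y, h(0)=0. Then for each fixed x \in (0,1), the map t \mapsto F_d(x,t) is continuous and strictly monotone decreasing on [x, 1]. -/

import Mathlib

open Real Set

/-- The entropy function `h(x) = -x log x` (with `h(0) = 0`, since `log 0 = 0` in Mathlib). -/
noncomputable def h (x : ℝ) : ℝ := -x * Real.log x

/-- The function `F_d(x,t)` governing the expected number of induced subgraphs of
density `x` and average degree `t d`. -/
noncomputable def F (d : ℕ) (x t : ℝ) : ℝ :=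
  h (t * x) + 2 * h ((1 - t) * x) + h (1 - (2 - t) * x)
    - (2 - 2 / (d : ℝ)) * (h x + h (1 - x))

lemma h_continuous : Continuous h := by
  unfold h
  have := Real.continuous_mul_log.neg
  exact this.congr (fun z => by simp [neg_mul])

lemma h_hasDerivAt {y : ℝ} (hy : y ≠ 0) : HasDerivAt h (-(Real.log y + 1)) y := by
  unfold h
  have := (Real.hasDerivAt_mul_log hy).neg
  refine this.congr_of_eventuallyEq (Filter.Eventually.of_forall fun z => ?_)
  simp [neg_mul]

theorem stmt_18 (d : ℕ) (hd : 3 ≤ d) (x : ℝ) (hx : x ∈ Ioo (0 : ℝ) 1) :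
    ContinuousOn (fun t => F d x t) (Icc x 1) ∧
    StrictAntiOn (fun t => F d x t) (Icc x 1) := by
  obtain ⟨hx0, hx1⟩ := hx
  have hcont : ContinuousOn (fun t => F d x t) (Icc x 1) := by
    apply Continuous.continuousOn
    unfold F
    have hc := h_continuous
    fun_prop
  refine ⟨hcont, ?_⟩
  apply strictAntiOn_of_deriv_neg (convex_Icc x 1) hcont
  intro t ht
  rw [interior_Icc] at ht
  obtain ⟨hxt, ht1⟩ := ht
  have ht0 : 0 < t := lt_trans hx0 hxt
  have hB : 0 < t * x := mul_pos ht0 hx0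
  have hA : 0 < (1 - t) * x := mul_pos (by linarith) hx0
  have hC : 0 < 1 - (2 - t) * x := by nlinarith [sq_nonneg (1 - x)]
  -- derivative pieces
  have H1 : HasDerivAt (fun s : ℝ => h (s * x)) ((-(Real.log (t * x) + 1)) * x) t := by
    have := (h_hasDerivAt hB.ne').comp t (hasDerivAt_mul_const x)
    simpa [Function.comp_def] using this
  have I2 : HasDerivAt (fun s : ℝ => (1 - s) * x) (-x) t := by
    have := ((hasDerivAt_id t).const_sub 1).mul_const x
    simpa using this
  have H2 : HasDerivAt (fun s : ℝ => h ((1 - s) * x))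
      ((-(Real.log ((1 - t) * x) + 1)) * (-x)) t := by
    have := (h_hasDerivAt hA.ne').comp t I2
    simpa [Function.comp_def] using this
  have I3 : HasDerivAt (fun s : ℝ => 1 - (2 - s) * x) x t := by
    have := (((hasDerivAt_id t).const_sub 2).mul_const x).const_sub 1
    simpa using this
  have H3 : HasDerivAt (fun s : ℝ => h (1 - (2 - s) * x))
      ((-(Real.log (1 - (2 - t) * x) + 1)) * x) t := by
    have := (h_hasDerivAt hC.ne').comp t I3
    simpa [Function.comp_def] using this
  have hF : HasDerivAt (fun t => F d x t)
      ((-(Real.log (t * x) + 1)) * x + 2 * ((-(Real.log ((1 - t) * x) + 1)) * (-x))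
        + (-(Real.log (1 - (2 - t) * x) + 1)) * x) t := by
    have := ((H1.add (H2.const_mul 2)).add H3).sub_const
      ((2 - 2 / (d : ℝ)) * (h x + h (1 - x)))
    simpa [F] using this
  rw [hF.deriv]
  -- the key log inequality
  have key : 2 * Real.log ((1 - t) * x)
      < Real.log (t * x) + Real.log (1 - (2 - t) * x) := by
    have h1 : Real.log (((1 - t) * x) ^ 2)
        < Real.log ((t * x) * (1 - (2 - t) * x)) := by
      apply Real.log_lt_log (by positivity)
      nlinarith [mul_pos hx0 (sub_pos.mpr hxt)]
    rw [Real.log_pow, Real.log_mul hB.ne' hC.ne'] at h1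
    push_cast at h1
    linarith
  nlinarith [mul_pos hx0 (show (0:ℝ) < Real.log (t * x) + Real.log (1 - (2 - t) * x)
    - 2 * Real.log ((1 - t) * x) by linarith)]
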